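/- For finite posets P and Q on d elements, every lattice point of ℤ^{d+2} is an integer linear combination of the lattice points of Ω(C_P, C_Q) × {1}; i.e., the lattice points of Ω(C_P,C_Q) × {1} generate ℤ^{d+2} as a group. -/

import Mathlib

def chainPolytope {d : ℕ} (r : Fin d → Fin d → Prop) : Set (Fin d → ℝ) :=
  {x | (∀ i, 0 ≤ x i) ∧
    ∀ c : Finset (Fin d), IsMaxChain r (c : Set (Fin d)) → ∑ i ∈ c, x i ≤ 1}

def OmegaPoly {d : ℕ} (A B : Set (Fin d → ℝ)) : Set (Fin (d + 1) → ℝ) :=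
  convexHull ℝ
    (((fun x => Fin.snoc x (1 : ℝ)) '' A) ∪ ((fun x => Fin.snoc (-x) (-1 : ℝ)) '' B))

lemma zero_mem_chain {d : ℕ} (r : Fin d → Fin d → Prop) :
    (0 : Fin d → ℝ) ∈ chainPolytope r :=
  ⟨fun _ => le_refl 0, fun c _ => by simp⟩

lemma single_mem_chain {d : ℕ} (r : Fin d → Fin d → Prop) (i : Fin d) :
    (Pi.single i 1 : Fin d → ℝ) ∈ chainPolytope r := by
  constructor
  · intro j
    rcases eq_or_ne j i with h | h <;> simp [Pi.single_apply, h]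
  · intro c _
    rw [Finset.sum_pi_single']
    split <;> norm_num

lemma cast_snoc {d : ℕ} (b : Fin d → ℤ) (z : ℤ) :
    (fun i => ((Fin.snoc b z : Fin (d+1) → ℤ) i : ℝ)) =
      Fin.snoc (fun i => (b i : ℝ)) (z : ℝ) := by
  funext i
  refine Fin.lastCases ?_ ?_ i <;> simp

lemma zero_mem_omega {d : ℕ} (r s : Fin d → Fin d → Prop) :
    (0 : Fin (d+1) → ℝ) ∈ OmegaPoly (chainPolytope r) (chainPolytope s) := by
  have h1 : (Fin.snoc (0 : Fin d → ℝ) 1 : Fin (d+1) → ℝ) ∈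
      ((fun x => Fin.snoc x (1 : ℝ)) '' chainPolytope r) ∪
      ((fun x => Fin.snoc (-x) (-1 : ℝ)) '' chainPolytope s) :=
    Or.inl ⟨0, zero_mem_chain r, rfl⟩
  have h2 : (Fin.snoc (-(0 : Fin d → ℝ)) (-1) : Fin (d+1) → ℝ) ∈
      ((fun x => Fin.snoc x (1 : ℝ)) '' chainPolytope r) ∪
      ((fun x => Fin.snoc (-x) (-1 : ℝ)) '' chainPolytope s) :=
    Or.inr ⟨0, zero_mem_chain s, rfl⟩
  have := (convex_convexHull ℝ _) (subset_convexHull ℝ _ h1) (subset_convexHull ℝ _ h2)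
    (by norm_num : (0:ℝ) ≤ 1/2) (by norm_num : (0:ℝ) ≤ 1/2) (by norm_num)
  unfold OmegaPoly
  convert this using 1
  funext i
  refine Fin.lastCases ?_ ?_ i <;> simp

theorem lattice_points_generate (d : ℕ) (P Q : PartialOrder (Fin d)) :
    AddSubgroup.closure
      {a : Fin (d + 2) → ℤ | a (Fin.last (d + 1)) = 1 ∧
        (fun i : Fin (d + 1) => (a (Fin.castSucc i) : ℝ)) ∈
          OmegaPoly (chainPolytope P.le) (chainPolytope Q.le)} = ⊤ := by
  set S : Set (Fin (d+2) → ℤ) :=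
    {a : Fin (d + 2) → ℤ | a (Fin.last (d + 1)) = 1 ∧
      (fun i : Fin (d + 1) => (a (Fin.castSucc i) : ℝ)) ∈
        OmegaPoly (chainPolytope P.le) (chainPolytope Q.le)} with hS
  -- w = (0,...,0,1)
  have hw : (Fin.snoc (0 : Fin (d+1) → ℤ) 1 : Fin (d+2) → ℤ) ∈ S := by
    constructor
    · simp
    · have : (fun i : Fin (d+1) =>
          ((Fin.snoc (0 : Fin (d+1) → ℤ) 1 : Fin (d+2) → ℤ) (Fin.castSucc i) : ℝ)) =
          (0 : Fin (d+1) → ℝ) := by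
        funext i; simp
      rw [this]
      exact zero_mem_omega P.le Q.le
  -- u0 = (0,...,0,1,1)
  have hu0 : (Fin.snoc (Fin.snoc (0 : Fin d → ℤ) 1) 1 : Fin (d+2) → ℤ) ∈ S := by
    constructor
    · simp
    · have : (fun i : Fin (d+1) =>
          ((Fin.snoc (Fin.snoc (0 : Fin d → ℤ) 1) 1 : Fin (d+2) → ℤ) (Fin.castSucc i) : ℝ)) =
          Fin.snoc (0 : Fin d → ℝ) 1 := by
        funext i
        simp only [Fin.snoc_castSucc]
        refine Fin.lastCases ?_ ?_ i <;> simp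
      rw [this]
      exact subset_convexHull ℝ _ (Or.inl ⟨0, zero_mem_chain P.le, rfl⟩)
  -- u i = (e_i, 1, 1)
  have hu : ∀ i : Fin d,
      (Fin.snoc (Fin.snoc (Pi.single i 1 : Fin d → ℤ) 1) 1 : Fin (d+2) → ℤ) ∈ S := by
    intro i
    constructor
    · simp
    · have : (fun j : Fin (d+1) =>
          ((Fin.snoc (Fin.snoc (Pi.single i 1 : Fin d → ℤ) 1) 1 : Fin (d+2) → ℤ)
            (Fin.castSucc j) : ℝ)) =
          Fin.snoc (Pi.single i 1 : Fin d → ℝ) 1 := by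
        funext j
        simp only [Fin.snoc_castSucc]
        refine Fin.lastCases ?_ ?_ j
        · simp
        · intro k
          simp [Pi.single_apply, apply_ite]
      rw [this]
      exact subset_convexHull ℝ _ (Or.inl ⟨_, single_mem_chain P.le i, rfl⟩)
  -- basis vectors in closure
  have hbasis : ∀ j : Fin (d+2), (Pi.single j 1 : Fin (d+2) → ℤ) ∈ AddSubgroup.closure S := by
    intro j
    refine Fin.lastCases ?_ ?_ j
    · have : (Pi.single (Fin.last (d+1)) 1 : Fin (d+2) → ℤ) =
        Fin.snoc (0 : Fin (d+1) → ℤ) 1 := by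
        funext k
        refine Fin.lastCases ?_ ?_ k <;> simp [Pi.single_apply, Fin.ext_iff]
        · intro k
          omega
      rw [this]; exact AddSubgroup.subset_closure hw
    · intro k
      refine Fin.lastCases ?_ ?_ k
      · have : (Pi.single (Fin.castSucc (Fin.last d)) 1 : Fin (d+2) → ℤ) =
          Fin.snoc (Fin.snoc (0 : Fin d → ℤ) 1) 1 - Fin.snoc (0 : Fin (d+1) → ℤ) 1 := by
          funext m
          refine Fin.lastCases ?_ ?_ m
          · simp [Pi.single_apply, Fin.ext_iff] <;> omega
          · intro m
            refine Fin.lastCases ?_ ?_ m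
            · simp
            · intro m
              simp [Pi.single_apply, Fin.ext_iff] <;> omega
        rw [this]
        exact sub_mem (AddSubgroup.subset_closure hu0) (AddSubgroup.subset_closure hw)
      · intro i
        have : (Pi.single (Fin.castSucc (Fin.castSucc i)) 1 : Fin (d+2) → ℤ) =
            Fin.snoc (Fin.snoc (Pi.single i 1 : Fin d → ℤ) 1) 1 -
            Fin.snoc (Fin.snoc (0 : Fin d → ℤ) 1) 1 := by
          funext m
          refine Fin.lastCases ?_ ?_ m
          · simp [Pi.single_apply, Fin.ext_iff] <;> omega
          · intro m
            refine Fin.lastCases ?_ ?_ m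
            · simp [Pi.single_apply, Fin.ext_iff] <;> omega
            · intro m
              simp [Pi.single_apply, Fin.ext_iff] <;> omega
        rw [this]
        exact sub_mem (AddSubgroup.subset_closure (hu i)) (AddSubgroup.subset_closure hu0)
  rw [AddSubgroup.eq_top_iff']
  intro a
  have ha : a = ∑ j : Fin (d+2), (a j) • (Pi.single j 1 : Fin (d+2) → ℤ) := by
    funext k
    simp [Pi.single_apply, Finset.sum_ite_eq']
  rw [ha]
  exact sum_mem fun j _ => AddSubgroup.zsmul_mem _ (hbasis j) _
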